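/- arXiv:2007.10537 — 3 statements merged into one kernel-verified Lean document; each statement's English description precedes it below -/
import Mathlib

section
/- Let G be a simple graph on the vertex set {0, 1, ..., n−1} containing all outer-cycle edges {l, l+1 mod n}, with positive integer capacities u(e) on its edges, and let (s_1,t_1), ..., (s_k,t_k) be demand pairs such that the edges of G together with the demand pairs are pairwise non-crossing chords of the circular order. Suppose the cut condition holds: for every subset X of vertices, the number of indices m with exactly one of s_m, t_m in X is at most u(δ_G(X)). Suppose some demand pair equals {v_i, v_j} with i < j and no vertex v_l with i < l < j is an endpoint of any demand pair. Let u' be obtained from u by decreasing the capacity of each of the edges {i,i+1}, {i+1,i+2}, ..., {j−1,j} by one, and let the demand list be obtained by deleting that demand. Then the cut condition still holds for the capacities u' and the reduced demand list. -/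
open SimpleGraph
open scoped Classical

/-- A set of edges (chords) on the circularly ordered vertex set `{0, …, n-1}` is
non-crossing if no two of its chords `{a,b}` and `{c,d}` satisfy `a < c < b < d`. -/
def NonCrossing (n : ℕ) (E : Set (Sym2 (Fin n))) : Prop :=
  ∀ a b c d : Fin n, a < c → c < b → b < d → s(a, b) ∈ E → s(c, d) ∈ E → False

/-- The total `u`-capacity of the cut `δ_G(X)`: the sum of `u e` over the edges `e` of `G`
having exactly one endpoint in `X`. -/
noncomputable def cutWeight {n : ℕ} (G : SimpleGraph (Fin n))
    (u : Sym2 (Fin n) → ℕ) (X : Set (Fin n)) : ℕ :=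
  ∑ e ∈ Finset.univ.filter
      (fun e : Sym2 (Fin n) =>
        e ∈ G.edgeSet ∧ ∃ a b : Fin n, e = s(a, b) ∧ a ∈ X ∧ b ∉ X),
    u e

/-- The cut condition: for every set `X` of vertices, the number of demands separated
by the cut `δ(X)` is at most the capacity of the cut in `G`. -/
def CutCondition {n : ℕ} (G : SimpleGraph (Fin n)) (u : Sym2 (Fin n) → ℕ)
    {ι : Type} [Fintype ι] (sdem tdem : ι → Fin n) : Prop :=
  ∀ X : Set (Fin n),
    (Finset.univ.filter
        (fun i : ι => (sdem i ∈ X ∧ tdem i ∉ X) ∨ (sdem i ∉ X ∧ tdem i ∈ X))).card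
      ≤ cutWeight G u X


def ncRel {n : ℕ} (G : SimpleGraph (Fin n)) (X : Set (Fin n)) (a b : Fin n) : Prop :=
  a ∈ X ∧ b ∈ X ∧ G.Adj a b

def ncReach {n : ℕ} (G : SimpleGraph (Fin n)) (X : Set (Fin n)) : Fin n → Fin n → Prop :=
  Relation.ReflTransGen (ncRel G X)

lemma ncStraddle {n : ℕ} {G : SimpleGraph (Fin n)} {X : Set (Fin n)} {v w m : Fin n}
    (hm : m ∉ X) (h : ncReach G X v w)
    (hvw : (v < m ∧ m < w) ∨ (w < m ∧ m < v)) :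
    ∃ x y : Fin n, ncRel G X x y ∧ x < m ∧ m < y := by
  induction h with
  | refl =>
    rcases hvw with ⟨h1, h2⟩ | ⟨h1, h2⟩ <;> exact absurd h2 (not_lt.2 h1.le)
  | @tail b c hab hbc ih =>
    rcases lt_trichotomy b m with hb | hb | hb
    · rcases hvw with ⟨h1, h2⟩ | ⟨h1, h2⟩
      · exact ⟨b, c, hbc, hb, h2⟩
      · exact ih (Or.inr ⟨hb, h2⟩)
    · exact absurd (hb ▸ hbc.1) hm
    · rcases hvw with ⟨h1, h2⟩ | ⟨h1, h2⟩
      · exact ih (Or.inl ⟨h1, hb⟩)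
      · exact ⟨c, b, ⟨hbc.2.1, hbc.1, hbc.2.2.symm⟩, h1, hb⟩

lemma ncStay {n : ℕ} {G : SimpleGraph (Fin n)} {E : Set (Sym2 (Fin n))}
    (hnc : NonCrossing n E) (hGE : ∀ a b : Fin n, G.Adj a b → s(a, b) ∈ E)
    {S : Set (Fin n)} {x y : Fin n} (hxy : s(x, y) ∈ E) (hxS : x ∉ S) (hyS : y ∉ S)
    {v w : Fin n} (h : ncReach G S v w) (hv : x < v ∧ v < y) : x < w ∧ w < y := by
  induction h with
  | refl => exact hv
  | @tail b c hab hbc ih =>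
    have hb := ih
    rcases lt_trichotomy x c with hxc | hxc | hxc
    · rcases lt_trichotomy c y with hcy | hcy | hcy
      · exact ⟨hxc, hcy⟩
      · exact absurd (hcy ▸ hbc.2.1) hyS
      · exact absurd (hnc x y b c hb.1 hb.2 hcy hxy (hGE _ _ hbc.2.2)) id
    · exact absurd (hxc ▸ hbc.2.1) hxS
    · exact absurd (hnc c b x y hxc hb.1 hb.2 (hGE _ _ hbc.2.2.symm) hxy) id

lemma ncNoAltQuad {n : ℕ} {G : SimpleGraph (Fin n)} {E : Set (Sym2 (Fin n))}
    (hnc : NonCrossing n E) (hGE : ∀ a b : Fin n, G.Adj a b → s(a, b) ∈ E)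
    {X : Set (Fin n)}
    (hX : ∀ a b : Fin n, a ∈ X → b ∈ X → ncReach G X a b)
    (hco : ∀ a b : Fin n, a ∉ X → b ∉ X → ncReach G Xᶜ a b)
    {a b c d : Fin n} (hab : a < b) (hbc : b < c) (hcd : c < d)
    (ha : a ∈ X) (hb : b ∉ X) (hc : c ∈ X) (hd : d ∉ X) : False := by
  obtain ⟨x, y, hxy, hxb, hby⟩ := ncStraddle hb (hX a c ha hc) (Or.inl ⟨hab, hbc⟩)
  have hsxy : s(x, y) ∈ E := hGE _ _ hxy.2.2
  have hxS : x ∉ (Xᶜ : Set (Fin n)) := by simp [hxy.1]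
  have hyS : y ∉ (Xᶜ : Set (Fin n)) := by simp [hxy.2.1]
  have hbin : x < b ∧ b < y := ⟨hxb, hby⟩
  have hdin : x < d ∧ d < y := ncStay hnc hGE hsxy hxS hyS (hco b d hb hd) hbin
  obtain ⟨z, w, hzw, hzc, hcw⟩ := ncStraddle (show c ∉ (Xᶜ : Set (Fin n)) by simp [hc])
    (hco b d hb hd) (Or.inl ⟨hbc, hcd⟩)
  have hzin : x < z ∧ z < y := ncStay hnc hGE hsxy hxS hyS (hco b z hb hzw.1) hbin
  have hwin : x < w ∧ w < y := ncStay hnc hGE hsxy hxS hyS (hco b w hb hzw.2.1) hbin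
  have hszw : s(z, w) ∈ E := hGE _ _ hzw.2.2
  have : z < y ∧ y < w :=
    ncStay hnc hGE hszw (by simp [hzw.1.out]) (by simp [hzw.2.1.out])
      (hX c y hc hxy.2.1) ⟨hzc, hcw⟩
  exact absurd this.2 (not_lt.2 hwin.2.le)


section

variable {n : ℕ} [NeZero n]

lemma valSucc (hn : 2 ≤ n) {p : Fin n} (h : (p : ℕ) + 1 < n) :
    ((p + 1 : Fin n) : ℕ) = (p : ℕ) + 1 := by
  have h1 : ((1 : Fin n) : ℕ) = 1 := by
    rw [Fin.val_one']; exact Nat.mod_eq_of_lt (by omega)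
  rw [Fin.val_add, h1, Nat.mod_eq_of_lt h]

lemma constFin (hn : 2 ≤ n) {X : Set (Fin n)} :
    ∀ d : ℕ, ∀ p q : Fin n, (q : ℕ) = (p : ℕ) + d →
      (∀ f : Fin n, p ≤ f → f < q → (f ∈ X ↔ f + 1 ∈ X)) → (p ∈ X ↔ q ∈ X) := by
  intro d
  induction d with
  | zero =>
    intro p q hq _
    have : p = q := Fin.ext (by omega)
    rw [this]
  | succ d ih =>
    intro p q hq hf
    have hqn : (q : ℕ) < n := q.isLt
    have hq'n : (p : ℕ) + d < n := by omega
    set q' : Fin n := ⟨(p : ℕ) + d, hq'n⟩ with hq'def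
    have hq'q : q' < q := by rw [Fin.lt_def]; simp [q']; omega
    have h1 : p ∈ X ↔ q' ∈ X :=
      ih p q' rfl (fun f hf1 hf2 => hf f hf1 (lt_trans hf2 hq'q))
    have hsucc : ((q' + 1 : Fin n) : ℕ) = (q' : ℕ) + 1 := valSucc hn (by simp [q']; omega)
    have h3 : q' + 1 = q := Fin.ext (by rw [hsucc]; simp [q']; omega)
    have h2 : q' ∈ X ↔ q' + 1 ∈ X := hf q' (by rw [Fin.le_def]; simp [q']) hq'q
    rw [← h3]; exact h1.trans h2

open Fin.NatCast in
lemma allSucc {X : Set (Fin n)} (h : ∀ l : Fin n, l ∈ X ↔ l + 1 ∈ X)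
    {a : Fin n} (ha : a ∈ X) : ∀ v, v ∈ X := by
  have key : ∀ m : ℕ, a + (m : Fin n) ∈ X := by
    intro m
    induction m with
    | zero => simpa using ha
    | succ m ih =>
      have hc : ((m + 1 : ℕ) : Fin n) = (m : Fin n) + 1 := by push_cast; ring
      rw [hc, ← add_assoc]
      exact (h _).1 ih
  intro v
  have := key ((v - a : Fin n) : ℕ)
  rwa [Fin.cast_val_eq_self, add_sub_cancel] at this
end


section
variable {n : ℕ} [NeZero n]

set_option maxHeartbeats 2000000 in
lemma threeFlips (hn : 2 ≤ n) {G : SimpleGraph (Fin n)} {E : Set (Sym2 (Fin n))}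
    (hnc : NonCrossing n E) (hGE : ∀ a b : Fin n, G.Adj a b → s(a, b) ∈ E)
    {X : Set (Fin n)}
    (hX : ∀ a b : Fin n, a ∈ X → b ∈ X → ncReach G X a b)
    (hco : ∀ a b : Fin n, a ∉ X → b ∉ X → ncReach G Xᶜ a b)
    {p q r : Fin n} (hpq : p < q) (hqr : q < r) (hr : (r : ℕ) + 1 < n)
    (fp : ¬(p ∈ X ↔ p + 1 ∈ X)) (fq : ¬(q ∈ X ↔ q + 1 ∈ X))
    (fr : ¬(r ∈ X ↔ r + 1 ∈ X)) : False := by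
  have hpv : (p : ℕ) < (q : ℕ) := hpq
  have hqv : (q : ℕ) < (r : ℕ) := hqr
  have hp1 : ((p + 1 : Fin n) : ℕ) = (p : ℕ) + 1 := valSucc hn (by omega)
  have hq1 : ((q + 1 : Fin n) : ℕ) = (q : ℕ) + 1 := valSucc hn (by omega)
  have hr1 : ((r + 1 : Fin n) : ℕ) = (r : ℕ) + 1 := valSucc hn hr
  have quad : ∀ a b c d : Fin n, a < b → b < c → c < d →
      ¬(a ∈ X ↔ b ∈ X) → (a ∈ X ↔ c ∈ X) → (b ∈ X ↔ d ∈ X) → False := by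
    intro a b c d h1 h2 h3 h4 h5 h6
    by_cases haX : a ∈ X
    · have hbX : b ∉ X := by tauto
      have hcX : c ∈ X := by tauto
      have hdX : d ∉ X := by tauto
      exact ncNoAltQuad hnc hGE hX hco h1 h2 h3 haX hbX hcX hdX
    · have hbX : b ∈ X := by tauto
      have hcX : c ∉ X := by tauto
      have hdX : d ∈ X := by tauto
      have hX' : ∀ a b : Fin n, a ∈ (Xᶜ : Set (Fin n)) → b ∈ (Xᶜ : Set (Fin n)) →
          ncReach G Xᶜ a b := fun a b ha hb => hco a b ha hb
      have hco' : ∀ a b : Fin n, a ∉ (Xᶜ : Set (Fin n)) → b ∉ (Xᶜ : Set (Fin n)) →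
          ncReach G Xᶜᶜ a b := by
        rw [compl_compl]
        intro a b ha hb
        exact hX a b (not_not.1 ha) (not_not.1 hb)
      exact ncNoAltQuad hnc hGE hX' hco' h1 h2 h3 haX (fun h => h hbX) hcX (fun h => h hdX)
  by_cases hpq2 : p ∈ X ↔ q ∈ X
  · -- quad (p, p+1, q, q+1)
    have hlt1 : p < p + 1 := by rw [Fin.lt_def, hp1]; omega
    have hlt2 : p + 1 < q := by
      rw [Fin.lt_def, hp1]
      rcases Nat.lt_or_ge ((p : ℕ) + 1) (q : ℕ) with h | h
      · exact h
      · exfalso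
        have : p + 1 = q := Fin.ext (by omega)
        rw [← this] at hpq2
        tauto
    have hlt3 : q < q + 1 := by rw [Fin.lt_def, hq1]; omega
    exact quad p (p + 1) q (q + 1) hlt1 hlt2 hlt3 fp hpq2 (by tauto)
  · by_cases hqr2 : q ∈ X ↔ r ∈ X
    · -- quad (p, q, q+1, r)
      have hlt3 : q + 1 < r := by
        rw [Fin.lt_def, hq1]
        rcases Nat.lt_or_ge ((q : ℕ) + 1) (r : ℕ) with h | h
        · exact h
        · exfalso
          have : q + 1 = r := Fin.ext (by omega)
          rw [← this] at hqr2
          tauto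
      have hlt2 : q < q + 1 := by rw [Fin.lt_def, hq1]; omega
      exact quad p q (q + 1) r hpq hlt2 hlt3 hpq2 (by tauto) (by tauto)
    · -- quad (p, q, q+1, r+1)
      have hlt2 : q < q + 1 := by rw [Fin.lt_def, hq1]; omega
      have hlt3 : q + 1 < r + 1 := by rw [Fin.lt_def, hq1, hr1]; omega
      exact quad p q (q + 1) (r + 1) hpq hlt2 hlt3 hpq2 (by tauto) (by tauto)
end

noncomputable def flipSet {n : ℕ} [NeZero n] (X : Set (Fin n)) : Finset (Fin n) :=
  Finset.univ.filter (fun l => ¬(l ∈ X ↔ l + 1 ∈ X))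

lemma flipSet_compl {n : ℕ} [NeZero n] (X : Set (Fin n)) : flipSet Xᶜ = flipSet X := by
  unfold flipSet
  ext l
  simp only [Finset.mem_filter, Finset.mem_univ, true_and, Set.mem_compl_iff]
  tauto

lemma flipSet_nonempty {n : ℕ} [NeZero n] {X : Set (Fin n)} {a b : Fin n}
    (ha : a ∈ X) (hb : b ∉ X) : (flipSet X).Nonempty := by
  by_contra h
  rw [Finset.not_nonempty_iff_eq_empty] at h
  have hall : ∀ l : Fin n, l ∈ X ↔ l + 1 ∈ X := by
    intro l
    by_contra hfl
    have : l ∈ flipSet X := by simp [flipSet, hfl]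
    simp [h] at this
  exact hb (allSucc hall ha b)

lemma splitStep {n : ℕ} [NeZero n] {G : SimpleGraph (Fin n)}
    (houter : ∀ l : Fin n, G.Adj l (l + 1))
    {X : Set (Fin n)} {a0 b0 : Fin n} (ha0 : a0 ∈ X) (hb0 : b0 ∈ X)
    (hnr : ¬ ncReach G X a0 b0) :
    ∃ X1 X2 : Set (Fin n),
      (∀ v, v ∈ X ↔ v ∈ X1 ∨ v ∈ X2) ∧
      (∀ v, v ∈ X1 → v ∈ X2 → False) ∧
      (∀ v w, G.Adj v w → v ∈ X1 → w ∈ X2 → False) ∧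
      (flipSet X1).card < (flipSet X).card ∧
      (flipSet X2).card < (flipSet X).card := by
  set X1 : Set (Fin n) := {v | v ∈ X ∧ ncReach G X a0 v} with hX1def
  set X2 : Set (Fin n) := X \ X1 with hX2def
  have hX1X : ∀ v, v ∈ X1 → v ∈ X := fun v hv => hv.1
  have hX2X : ∀ v, v ∈ X2 → v ∈ X := fun v hv => hv.1
  have hcl : ∀ v w, v ∈ X1 → w ∈ X → G.Adj v w → w ∈ X1 := by
    intro v w hv hw hadj
    exact ⟨hw, Relation.ReflTransGen.tail hv.2 ⟨hv.1, hw, hadj⟩⟩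
  have hclb : ∀ v w, v ∈ X → w ∈ X1 → G.Adj v w → v ∈ X1 := by
    intro v w hv hw hadj
    exact ⟨hv, Relation.ReflTransGen.tail hw.2 ⟨hw.1, hv, hadj.symm⟩⟩
  have hmem : ∀ v, v ∈ X ↔ v ∈ X1 ∨ v ∈ X2 := by
    intro v
    constructor
    · intro hv
      by_cases h : v ∈ X1
      · exact Or.inl h
      · exact Or.inr ⟨hv, h⟩
    · rintro (h | h)
      · exact h.1
      · exact h.1
  have hdisj : ∀ v, v ∈ X1 → v ∈ X2 → False := fun v h1 h2 => h2.2 h1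
  have hnoadj : ∀ v w, G.Adj v w → v ∈ X1 → w ∈ X2 → False := by
    intro v w hadj h1 h2
    exact h2.2 (hcl v w h1 h2.1 hadj)
  -- refined flip characterizations
  have r1 : ∀ l : Fin n, l ∈ flipSet X1 →
      (l ∈ X1 ∧ l + 1 ∉ X) ∨ (l ∉ X ∧ l + 1 ∈ X1) := by
    intro l hl
    simp only [flipSet, Finset.mem_filter] at hl
    by_cases h : l ∈ X1
    · left
      refine ⟨h, fun hs => ?_⟩
      exact hl.2 ⟨fun _ => hcl l (l + 1) h hs (houter l), fun _ => h⟩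
    · right
      have hs : l + 1 ∈ X1 := by tauto
      refine ⟨fun hlX => h (hclb l (l + 1) hlX hs (houter l)), hs⟩
  have r2 : ∀ l : Fin n, l ∈ flipSet X2 →
      (l ∈ X2 ∧ l + 1 ∉ X) ∨ (l ∉ X ∧ l + 1 ∈ X2) := by
    intro l hl
    simp only [flipSet, Finset.mem_filter] at hl
    by_cases h : l ∈ X2
    · left
      refine ⟨h, fun hs => ?_⟩
      apply hl.2
      have hs2 : l + 1 ∈ X2 := by
        refine ⟨hs, fun hs1 => ?_⟩
        exact h.2 (hclb l (l + 1) h.1 hs1 (houter l))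
      exact ⟨fun _ => hs2, fun _ => h⟩
    · right
      have hs : l + 1 ∈ X2 := by tauto
      refine ⟨fun hlX => ?_, hs⟩
      have h1 : l ∈ X1 := by
        by_contra hn1
        exact h ⟨hlX, hn1⟩
      exact hs.2 (hcl l (l + 1) h1 hs.1 (houter l))
  have hsub1 : flipSet X1 ⊆ flipSet X := by
    intro l hl
    simp only [flipSet, Finset.mem_filter]
    refine ⟨Finset.mem_univ _, ?_⟩
    rcases r1 l hl with ⟨h1, h2⟩ | ⟨h1, h2⟩
    · intro hiff; exact h2 (hiff.1 (hX1X _ h1))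
    · intro hiff; exact h1 (hiff.2 (hX1X _ h2))
  have hsub2 : flipSet X2 ⊆ flipSet X := by
    intro l hl
    simp only [flipSet, Finset.mem_filter]
    refine ⟨Finset.mem_univ _, ?_⟩
    rcases r2 l hl with ⟨h1, h2⟩ | ⟨h1, h2⟩
    · intro hiff; exact h2 (hiff.1 (hX2X _ h1))
    · intro hiff; exact h1 (hiff.2 (hX2X _ h2))
  have hdisjf : Disjoint (flipSet X1) (flipSet X2) := by
    rw [Finset.disjoint_left]
    intro l hl1 hl2
    rcases r1 l hl1 with ⟨h1, h2⟩ | ⟨h1, h2⟩ <;> rcases r2 l hl2 with ⟨g1, g2⟩ | ⟨g1, g2⟩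
    · exact hdisj l h1 g1
    · exact g1 (hX1X _ h1)
    · exact h1 (hX2X _ g1)
    · exact hdisj (l + 1) h2 g2
  have hne1 : (flipSet X1).Nonempty := by
    refine flipSet_nonempty (a := a0) (b := b0) ⟨ha0, Relation.ReflTransGen.refl⟩ ?_
    intro hb
    exact hnr hb.2
  have hne2 : (flipSet X2).Nonempty := by
    refine flipSet_nonempty (a := b0) (b := a0) ⟨hb0, ?_⟩ ?_
    · intro hb
      exact hnr hb.2
    · intro ha
      exact ha.2 ⟨ha0, Relation.ReflTransGen.refl⟩
  have hcards : (flipSet X1).card + (flipSet X2).card ≤ (flipSet X).card := by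
    rw [← Finset.card_union_of_disjoint hdisjf]
    exact Finset.card_le_card (Finset.union_subset hsub1 hsub2)
  obtain ⟨c1, hc1⟩ := hne1
  obtain ⟨c2, hc2⟩ := hne2
  have hp1 : 0 < (flipSet X1).card := Finset.card_pos.2 ⟨c1, hc1⟩
  have hp2 : 0 < (flipSet X2).card := Finset.card_pos.2 ⟨c2, hc2⟩
  exact ⟨X1, X2, hmem, hdisj, hnoadj, by omega, by omega⟩


lemma deltaSplit {n : ℕ} [NeZero n] {G : SimpleGraph (Fin n)}
    {Y X1 X2 : Set (Fin n)}
    (hmem : ∀ v, v ∈ Y ↔ v ∈ X1 ∨ v ∈ X2)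
    (hdisj : ∀ v, v ∈ X1 → v ∈ X2 → False)
    (hnoadj : ∀ v w, G.Adj v w → v ∈ X1 → w ∈ X2 → False)
    (f : Sym2 (Fin n) → ℕ) :
    (∑ e ∈ Finset.univ.filter (fun e : Sym2 (Fin n) =>
        e ∈ G.edgeSet ∧ ∃ a b : Fin n, e = s(a, b) ∧ a ∈ Y ∧ b ∉ Y), f e)
    = (∑ e ∈ Finset.univ.filter (fun e : Sym2 (Fin n) =>
        e ∈ G.edgeSet ∧ ∃ a b : Fin n, e = s(a, b) ∧ a ∈ X1 ∧ b ∉ X1), f e)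
    + (∑ e ∈ Finset.univ.filter (fun e : Sym2 (Fin n) =>
        e ∈ G.edgeSet ∧ ∃ a b : Fin n, e = s(a, b) ∧ a ∈ X2 ∧ b ∉ X2), f e) := by
  have hnoadj' : ∀ v w, G.Adj v w → v ∈ X2 → w ∈ X1 → False :=
    fun v w hadj h2 h1 => hnoadj w v hadj.symm h1 h2
  have hsub1 : ∀ v, v ∈ X1 → v ∈ Y := fun v hv => (hmem v).2 (Or.inl hv)
  have hsub2 : ∀ v, v ∈ X2 → v ∈ Y := fun v hv => (hmem v).2 (Or.inr hv)
  have hset : Finset.univ.filter (fun e : Sym2 (Fin n) =>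
        e ∈ G.edgeSet ∧ ∃ a b : Fin n, e = s(a, b) ∧ a ∈ Y ∧ b ∉ Y)
      = (Finset.univ.filter (fun e : Sym2 (Fin n) =>
        e ∈ G.edgeSet ∧ ∃ a b : Fin n, e = s(a, b) ∧ a ∈ X1 ∧ b ∉ X1))
      ∪ (Finset.univ.filter (fun e : Sym2 (Fin n) =>
        e ∈ G.edgeSet ∧ ∃ a b : Fin n, e = s(a, b) ∧ a ∈ X2 ∧ b ∉ X2)) := by
    ext e
    simp only [Finset.mem_filter, Finset.mem_univ, true_and, Finset.mem_union]
    constructor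
    · rintro ⟨hE, a, b, rfl, ha, hb⟩
      rcases (hmem a).1 ha with h1 | h2
      · exact Or.inl ⟨hE, a, b, rfl, h1, fun hb1 => hb (hsub1 b hb1)⟩
      · exact Or.inr ⟨hE, a, b, rfl, h2, fun hb2 => hb (hsub2 b hb2)⟩
    · rintro (⟨hE, a, b, rfl, ha, hb⟩ | ⟨hE, a, b, rfl, ha, hb⟩)
      · refine ⟨hE, a, b, rfl, hsub1 a ha, fun hbY => ?_⟩
        rcases (hmem b).1 hbY with h1 | h2
        · exact hb h1
        · exact hnoadj a b (G.mem_edgeSet.1 hE) ha h2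
      · refine ⟨hE, a, b, rfl, hsub2 a ha, fun hbY => ?_⟩
        rcases (hmem b).1 hbY with h1 | h2
        · exact hnoadj' a b (G.mem_edgeSet.1 hE) ha h1
        · exact hb h2
  have hdisjf : Disjoint
      (Finset.univ.filter (fun e : Sym2 (Fin n) =>
        e ∈ G.edgeSet ∧ ∃ a b : Fin n, e = s(a, b) ∧ a ∈ X1 ∧ b ∉ X1))
      (Finset.univ.filter (fun e : Sym2 (Fin n) =>
        e ∈ G.edgeSet ∧ ∃ a b : Fin n, e = s(a, b) ∧ a ∈ X2 ∧ b ∉ X2)) := by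
    rw [Finset.disjoint_left]
    intro e he1 he2
    simp only [Finset.mem_filter, Finset.mem_univ, true_and] at he1 he2
    obtain ⟨hE, a, b, rfl, ha, hb⟩ := he1
    obtain ⟨_, a', b', heq, ha', hb'⟩ := he2
    rcases Sym2.eq_iff.1 heq with ⟨h1, h2⟩ | ⟨h1, h2⟩
    · exact hdisj a ha (h1 ▸ ha')
    · exact hnoadj a b (G.mem_edgeSet.1 hE) ha (h2 ▸ ha')
  rw [hset, Finset.sum_union hdisjf]

lemma sepSplit {n : ℕ} {ι : Type} [Fintype ι]
    (sdem tdem : ι → Fin n)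
    {Y X1 X2 : Set (Fin n)}
    (hmem : ∀ v, v ∈ Y ↔ v ∈ X1 ∨ v ∈ X2) :
    (Finset.univ.filter (fun m : ι =>
        (sdem m ∈ Y ∧ tdem m ∉ Y) ∨ (sdem m ∉ Y ∧ tdem m ∈ Y))).card
    ≤ (Finset.univ.filter (fun m : ι =>
        (sdem m ∈ X1 ∧ tdem m ∉ X1) ∨ (sdem m ∉ X1 ∧ tdem m ∈ X1))).card
    + (Finset.univ.filter (fun m : ι =>
        (sdem m ∈ X2 ∧ tdem m ∉ X2) ∨ (sdem m ∉ X2 ∧ tdem m ∈ X2))).card := by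
  have hsub1 : ∀ v, v ∈ X1 → v ∈ Y := fun v hv => (hmem v).2 (Or.inl hv)
  have hsub2 : ∀ v, v ∈ X2 → v ∈ Y := fun v hv => (hmem v).2 (Or.inr hv)
  refine le_trans (le_trans (Finset.card_le_card ?_) (Finset.card_union_le _ _)) le_rfl
  intro m hm
  simp only [Finset.mem_filter, Finset.mem_univ, true_and, Finset.mem_union] at hm ⊢
  rcases hm with ⟨hs, ht⟩ | ⟨hs, ht⟩
  · rcases (hmem _).1 hs with h1 | h2
    · exact Or.inl (Or.inl ⟨h1, fun h => ht (hsub1 _ h)⟩)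
    · exact Or.inr (Or.inl ⟨h2, fun h => ht (hsub2 _ h)⟩)
  · rcases (hmem _).1 ht with h1 | h2
    · exact Or.inl (Or.inr ⟨fun h => hs (hsub1 _ h), h1⟩)
    · exact Or.inr (Or.inr ⟨fun h => hs (hsub2 _ h), h2⟩)

lemma deltaCompl {n : ℕ} [NeZero n] {G : SimpleGraph (Fin n)} (X : Set (Fin n)) :
    Finset.univ.filter (fun e : Sym2 (Fin n) =>
        e ∈ G.edgeSet ∧ ∃ a b : Fin n, e = s(a, b) ∧ a ∈ X ∧ b ∉ X)
    = Finset.univ.filter (fun e : Sym2 (Fin n) =>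
        e ∈ G.edgeSet ∧ ∃ a b : Fin n, e = s(a, b) ∧ a ∈ Xᶜ ∧ b ∉ Xᶜ) := by
  ext e
  simp only [Finset.mem_filter, Finset.mem_univ, true_and, Set.mem_compl_iff, not_not]
  constructor
  · rintro ⟨hE, a, b, rfl, ha, hb⟩
    exact ⟨hE, b, a, Sym2.eq_swap, hb, ha⟩
  · rintro ⟨hE, a, b, rfl, ha, hb⟩
    exact ⟨hE, b, a, Sym2.eq_swap, hb, ha⟩

set_option maxHeartbeats 1000000 in
lemma baseCase (n : ℕ) [NeZero n] (hn : 2 ≤ n) (k : ℕ) (G : SimpleGraph (Fin n))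
    (u : Sym2 (Fin n) → ℕ) (hu : ∀ e ∈ G.edgeSet, 0 < u e)
    (sdem tdem : Fin k → Fin n)
    (hnc : NonCrossing n
      (G.edgeSet ∪ {e : Sym2 (Fin n) | ∃ m : Fin k, e = s(sdem m, tdem m)}))
    (m0 : Fin k) (i j : Fin n) (hij : i < j)
    (hdem : s(sdem m0, tdem m0) = s(i, j))
    (hnoterm : ∀ l : Fin n, i < l → l < j → ∀ m : Fin k, sdem m ≠ l ∧ tdem m ≠ l)
    (X : Set (Fin n))
    (hcut : (Finset.univ.filter (fun m : Fin k =>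
        (sdem m ∈ X ∧ tdem m ∉ X) ∨ (sdem m ∉ X ∧ tdem m ∈ X))).card
        ≤ ∑ e ∈ Finset.univ.filter (fun e : Sym2 (Fin n) =>
            e ∈ G.edgeSet ∧ ∃ a b : Fin n, e = s(a, b) ∧ a ∈ X ∧ b ∉ X), u e)
    (hX : ∀ a b : Fin n, a ∈ X → b ∈ X → ncReach G X a b)
    (hco : ∀ a b : Fin n, a ∉ X → b ∉ X → ncReach G Xᶜ a b) :
    (Finset.univ.filter (fun m : {m : Fin k // m ≠ m0} =>
        (sdem m.1 ∈ X ∧ tdem m.1 ∉ X) ∨ (sdem m.1 ∉ X ∧ tdem m.1 ∈ X))).card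
      ≤ ∑ e ∈ Finset.univ.filter (fun e : Sym2 (Fin n) =>
            e ∈ G.edgeSet ∧ ∃ a b : Fin n, e = s(a, b) ∧ a ∈ X ∧ b ∉ X),
          (if ∃ l : Fin n, i ≤ l ∧ l < j ∧ e = s(l, l + 1) then u e - 1 else u e) := by
  have hGE : ∀ a b : Fin n, G.Adj a b →
      s(a, b) ∈ (G.edgeSet ∪ {e : Sym2 (Fin n) | ∃ m : Fin k, e = s(sdem m, tdem m)}) :=
    fun a b h => Or.inl h
  have h3 : ∀ p q r : Fin n, p < q → q < r → (r : ℕ) + 1 < n →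
      ¬(p ∈ X ↔ p + 1 ∈ X) → ¬(q ∈ X ↔ q + 1 ∈ X) → ¬(r ∈ X ↔ r + 1 ∈ X) → False :=
    fun p q r h1 h2 hr f1 f2 f3 => threeFlips hn hnc hGE hX hco h1 h2 hr f1 f2 f3
  have hjn : (j : ℕ) < n := j.isLt
  have hijv : (i : ℕ) < (j : ℕ) := hij
  set T : Finset (Fin n) :=
    Finset.univ.filter (fun l : Fin n => i ≤ l ∧ l < j ∧ ¬(l ∈ X ↔ l + 1 ∈ X)) with hTdef
  have hTmem : ∀ l : Fin n, l ∈ T ↔ (i ≤ l ∧ l < j ∧ ¬(l ∈ X ↔ l + 1 ∈ X)) := by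
    intro l; simp [hTdef]
  set SD : Finset (Sym2 (Fin n)) :=
    Finset.univ.filter (fun e : Sym2 (Fin n) =>
      e ∈ G.edgeSet ∧ ∃ a b : Fin n, e = s(a, b) ∧ a ∈ X ∧ b ∉ X) with hSDdef
  have F1 : ∀ e ∈ SD, (∃ l : Fin n, i ≤ l ∧ l < j ∧ e = s(l, l + 1)) →
      ∃ l, l ∈ T ∧ e = s(l, l + 1) := by
    intro e he hp
    obtain ⟨l, hl1, hl2, rfl⟩ := hp
    simp only [hSDdef, Finset.mem_filter, Finset.mem_univ, true_and] at he
    obtain ⟨hE, a, b, heq, ha, hb⟩ := he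
    have hflip : ¬(l ∈ X ↔ l + 1 ∈ X) := by
      rcases Sym2.eq_iff.1 heq with ⟨h1, h2⟩ | ⟨h1, h2⟩
      · rw [← h1] at ha; rw [← h2] at hb; tauto
      · rw [← h2] at ha; rw [← h1] at hb; tauto
    exact ⟨l, (hTmem l).2 ⟨hl1, hl2, hflip⟩, rfl⟩
  have hsub : (Finset.univ.filter (fun m : {m : Fin k // m ≠ m0} =>
      (sdem m.1 ∈ X ∧ tdem m.1 ∉ X) ∨ (sdem m.1 ∉ X ∧ tdem m.1 ∈ X))).card
      ≤ (Finset.univ.filter (fun m : Fin k =>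
      (sdem m ∈ X ∧ tdem m ∉ X) ∨ (sdem m ∉ X ∧ tdem m ∈ X))).card := by
    apply Finset.card_le_card_of_injOn (fun m => m.1)
    · intro m hm
      simp only [Finset.mem_coe, Finset.mem_filter, Finset.mem_univ, true_and] at hm ⊢
      exact hm
    · intro a _ b _ h
      exact Subtype.ext h
  by_cases hc0 : T.card = 0
  · -- no path edge crosses
    have hT0 : T = ∅ := Finset.card_eq_zero.1 hc0
    have hsum : ∑ e ∈ SD, (if ∃ l : Fin n, i ≤ l ∧ l < j ∧ e = s(l, l + 1)
        then u e - 1 else u e) = ∑ e ∈ SD, u e := by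
      apply Finset.sum_congr rfl
      intro e he
      have hnp : ¬ ∃ l : Fin n, i ≤ l ∧ l < j ∧ e = s(l, l + 1) := by
        intro hp
        obtain ⟨l, hlT, _⟩ := F1 e he hp
        rw [hT0] at hlT
        exact absurd hlT (Finset.notMem_empty l)
      rw [if_neg hnp]
    rw [hsum]
    exact le_trans hsub hcut
  by_cases hc1 : T.card = 1
  · obtain ⟨l0, hT1⟩ := Finset.card_eq_one.1 hc1
    have hl0 : l0 ∈ T := by rw [hT1]; exact Finset.mem_singleton_self l0
    obtain ⟨hil0, hl0j, hfl0⟩ := (hTmem l0).1 hl0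
    have hil0v : (i : ℕ) ≤ (l0 : ℕ) := hil0
    have hl0jv : (l0 : ℕ) < (j : ℕ) := hl0j
    have hsucc0 : ((l0 + 1 : Fin n) : ℕ) = (l0 : ℕ) + 1 := valSucc hn (by omega)
    have c1 : i ∈ X ↔ l0 ∈ X := by
      apply constFin hn ((l0 : ℕ) - (i : ℕ)) i l0 (by omega)
      intro f hf1 hf2
      by_contra hff
      have hfT : f ∈ T := (hTmem f).2 ⟨hf1, lt_trans hf2 hl0j, hff⟩
      rw [hT1, Finset.mem_singleton] at hfT
      exact absurd (hfT ▸ hf2) (lt_irrefl l0)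
    have c2 : l0 + 1 ∈ X ↔ j ∈ X := by
      apply constFin hn ((j : ℕ) - ((l0 : ℕ) + 1)) (l0 + 1) j (by rw [hsucc0]; omega)
      intro f hf1 hf2
      have hf1v : (l0 : ℕ) + 1 ≤ (f : ℕ) := by
        have := (Fin.le_def.1 hf1); rwa [hsucc0] at this
      by_contra hff
      have hfT : f ∈ T := (hTmem f).2 ⟨Fin.le_def.2 (by omega), hf2, hff⟩
      rw [hT1, Finset.mem_singleton] at hfT
      have : (f : ℕ) = (l0 : ℕ) := by rw [hfT]
      omega
    have hchi : ¬(i ∈ X ↔ j ∈ X) := by tauto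
    have hm0 : m0 ∈ Finset.univ.filter (fun m : Fin k =>
        (sdem m ∈ X ∧ tdem m ∉ X) ∨ (sdem m ∉ X ∧ tdem m ∈ X)) := by
      simp only [Finset.mem_filter, Finset.mem_univ, true_and]
      rcases Sym2.eq_iff.1 hdem with ⟨h1, h2⟩ | ⟨h1, h2⟩ <;> rw [h1, h2] <;> tauto
    have hsep : (Finset.univ.filter (fun m : {m : Fin k // m ≠ m0} =>
        (sdem m.1 ∈ X ∧ tdem m.1 ∉ X) ∨ (sdem m.1 ∉ X ∧ tdem m.1 ∈ X))).card + 1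
        ≤ (Finset.univ.filter (fun m : Fin k =>
        (sdem m ∈ X ∧ tdem m ∉ X) ∨ (sdem m ∉ X ∧ tdem m ∈ X))).card := by
      have hinj : (Finset.univ.filter (fun m : {m : Fin k // m ≠ m0} =>
          (sdem m.1 ∈ X ∧ tdem m.1 ∉ X) ∨ (sdem m.1 ∉ X ∧ tdem m.1 ∈ X))).card
          ≤ ((Finset.univ.filter (fun m : Fin k =>
          (sdem m ∈ X ∧ tdem m ∉ X) ∨ (sdem m ∉ X ∧ tdem m ∈ X))).erase m0).card := by
        apply Finset.card_le_card_of_injOn (fun m => m.1)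
        · intro m hm
          simp only [Finset.mem_coe, Finset.mem_filter, Finset.mem_univ, true_and] at hm
          apply Finset.mem_erase.2
          refine ⟨m.2, ?_⟩
          simp only [Finset.mem_filter, Finset.mem_univ, true_and]
          exact hm
        · intro a _ b _ h
          exact Subtype.ext h
      have herase := Finset.card_erase_of_mem hm0
      have hpos : 0 < (Finset.univ.filter (fun m : Fin k =>
          (sdem m ∈ X ∧ tdem m ∉ X) ∨ (sdem m ∉ X ∧ tdem m ∈ X))).card :=
        Finset.card_pos.2 ⟨m0, hm0⟩
      omega
    have hcap : ∑ e ∈ SD, u e ≤ (∑ e ∈ SD, (if ∃ l : Fin n, i ≤ l ∧ l < j ∧ e = s(l, l + 1)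
        then u e - 1 else u e)) + 1 := by
      have hpt : ∀ e ∈ SD, u e ≤ (if ∃ l : Fin n, i ≤ l ∧ l < j ∧ e = s(l, l + 1)
          then u e - 1 else u e) + (if e = s(l0, l0 + 1) then 1 else 0) := by
        intro e he
        by_cases hp : ∃ l : Fin n, i ≤ l ∧ l < j ∧ e = s(l, l + 1)
        · obtain ⟨l, hlT, rfl⟩ := F1 e he hp
          rw [hT1, Finset.mem_singleton] at hlT
          subst hlT
          have hE : s(l, l + 1) ∈ G.edgeSet := by
            have := (Finset.mem_filter.1 he).2
            exact this.1
          have hupos : 0 < u s(l, l + 1) := hu _ hE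
          rw [if_pos hp, if_pos rfl]
          omega
        · rw [if_neg hp]
          split <;> omega
      calc ∑ e ∈ SD, u e
          ≤ ∑ e ∈ SD, ((if ∃ l : Fin n, i ≤ l ∧ l < j ∧ e = s(l, l + 1)
              then u e - 1 else u e) + (if e = s(l0, l0 + 1) then 1 else 0)) :=
            Finset.sum_le_sum hpt
        _ = (∑ e ∈ SD, (if ∃ l : Fin n, i ≤ l ∧ l < j ∧ e = s(l, l + 1)
              then u e - 1 else u e)) + ∑ e ∈ SD, (if e = s(l0, l0 + 1) then 1 else 0) :=
            Finset.sum_add_distrib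
        _ ≤ (∑ e ∈ SD, (if ∃ l : Fin n, i ≤ l ∧ l < j ∧ e = s(l, l + 1)
              then u e - 1 else u e)) + 1 := by
            have : ∑ e ∈ SD, (if e = s(l0, l0 + 1) then 1 else 0) ≤ 1 := by
              rw [Finset.sum_ite_eq' SD (s(l0, l0 + 1)) (fun _ => 1)]
              split <;> omega
            omega
    omega
  · -- at least two crossings
    have hc2 : 1 < T.card := by
      rcases Nat.lt_or_ge T.card 2 with h | h
      · interval_cases h' : T.card <;> simp_all
      · omega
    obtain ⟨x, hx, y, hy, hxy⟩ := Finset.one_lt_card.1 hc2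
    obtain ⟨l1, l2, h12, hl1T, hl2T⟩ : ∃ l1 l2 : Fin n, l1 < l2 ∧ l1 ∈ T ∧ l2 ∈ T := by
      rcases lt_or_gt_of_ne hxy with h | h
      · exact ⟨x, y, h, hx, hy⟩
      · exact ⟨y, x, h, hy, hx⟩
    obtain ⟨hil1, hl1j, hfl1⟩ := (hTmem l1).1 hl1T
    obtain ⟨hil2, hl2j, hfl2⟩ := (hTmem l2).1 hl2T
    have hil1v : (i : ℕ) ≤ (l1 : ℕ) := hil1
    have hl1jv : (l1 : ℕ) < (j : ℕ) := hl1j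
    have hil2v : (i : ℕ) ≤ (l2 : ℕ) := hil2
    have hl2jv : (l2 : ℕ) < (j : ℕ) := hl2j
    have h12v : (l1 : ℕ) < (l2 : ℕ) := h12
    have hsucc1 : ((l1 + 1 : Fin n) : ℕ) = (l1 : ℕ) + 1 := valSucc hn (by omega)
    have hsucc2 : ((l2 + 1 : Fin n) : ℕ) = (l2 : ℕ) + 1 := valSucc hn (by omega)
    have hij2 : i ∈ X ↔ j ∈ X := by
      have cA : i ∈ X ↔ l1 ∈ X := by
        apply constFin hn ((l1 : ℕ) - (i : ℕ)) i l1 (by omega)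
        intro f hf1 hf2
        by_contra hff
        exact h3 f l1 l2 hf2 h12 (by omega) hff hfl1 hfl2
      have cB : l1 + 1 ∈ X ↔ l2 ∈ X := by
        apply constFin hn ((l2 : ℕ) - ((l1 : ℕ) + 1)) (l1 + 1) l2 (by rw [hsucc1]; omega)
        intro f hf1 hf2
        have hf1v : (l1 : ℕ) + 1 ≤ (f : ℕ) := by
          have := Fin.le_def.1 hf1; rwa [hsucc1] at this
        by_contra hff
        exact h3 l1 f l2 (Fin.lt_def.2 (by omega)) hf2 (by omega) hfl1 hff hfl2
      have cC : l2 + 1 ∈ X ↔ j ∈ X := by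
        apply constFin hn ((j : ℕ) - ((l2 : ℕ) + 1)) (l2 + 1) j (by rw [hsucc2]; omega)
        intro f hf1 hf2
        by_contra hff
        have hfv : (f : ℕ) < (j : ℕ) := hf2
        exact h3 l1 l2 f h12 (Fin.lt_def.2 (by
          have := Fin.le_def.1 hf1; rw [hsucc2] at this; omega)) (by omega) hfl1 hfl2 hff
      tauto
    have sameSide : ∀ v : Fin n, ¬(i < v ∧ v < j) → (v ∈ X ↔ i ∈ X) := by
      intro v hv
      have hval : (v : ℕ) ≤ (i : ℕ) ∨ (j : ℕ) ≤ (v : ℕ) := by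
        rcases not_and_or.1 hv with h | h
        · left; exact Nat.le_of_not_lt (fun hc => h (Fin.lt_def.2 hc))
        · right; exact Nat.le_of_not_lt (fun hc => h (Fin.lt_def.2 hc))
      rcases hval with hvi | hjv
      · apply constFin hn ((i : ℕ) - (v : ℕ)) v i (by omega)
        intro f hf1 hf2
        by_contra hff
        have hfv : (f : ℕ) < (i : ℕ) := hf2
        exact h3 f l1 l2 (Fin.lt_def.2 (by omega)) h12 (by omega) hff hfl1 hfl2
      · have hc : j ∈ X ↔ v ∈ X := by
          apply constFin hn ((v : ℕ) - (j : ℕ)) j v (by omega)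
          intro f hf1 hf2
          by_contra hff
          have hfv1 : (j : ℕ) ≤ (f : ℕ) := hf1
          have hfv2 : (f : ℕ) < (v : ℕ) := hf2
          have hvn : (v : ℕ) < n := v.isLt
          exact h3 l1 l2 f h12 (Fin.lt_def.2 (by omega)) (by omega) hfl1 hfl2 hff
        tauto
    have hterm : ∀ m : Fin k, (sdem m ∈ X ↔ i ∈ X) ∧ (tdem m ∈ X ↔ i ∈ X) := by
      intro m
      constructor
      · exact sameSide _ (fun ⟨h1, h2⟩ => (hnoterm _ h1 h2 m).1 rfl)
      · exact sameSide _ (fun ⟨h1, h2⟩ => (hnoterm _ h1 h2 m).2 rfl)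
    have hempty : (Finset.univ.filter (fun m : {m : Fin k // m ≠ m0} =>
        (sdem m.1 ∈ X ∧ tdem m.1 ∉ X) ∨ (sdem m.1 ∉ X ∧ tdem m.1 ∈ X))).card = 0 := by
      rw [Finset.card_eq_zero, Finset.filter_eq_empty_iff]
      intro m _
      obtain ⟨hs, ht⟩ := hterm m.1
      rintro (⟨h1, h2⟩ | ⟨h1, h2⟩)
      · exact h2 (ht.2 (hs.1 h1))
      · exact h1 (hs.2 (ht.1 h2))
    rw [hempty]
    exact Nat.zero_le _

lemma flipSet_swap {n : ℕ} [NeZero n] {X Z : Set (Fin n)}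
    (hZ : ∀ v, v ∈ Z ↔ v ∉ X) : flipSet Z = flipSet X := by
  unfold flipSet
  ext l
  simp only [Finset.mem_filter, Finset.mem_univ, true_and, hZ]
  tauto

lemma deltaSwap {n : ℕ} [NeZero n] {G : SimpleGraph (Fin n)} {X Z : Set (Fin n)}
    (hZ : ∀ v, v ∈ Z ↔ v ∉ X) :
    Finset.univ.filter (fun e : Sym2 (Fin n) =>
        e ∈ G.edgeSet ∧ ∃ a b : Fin n, e = s(a, b) ∧ a ∈ X ∧ b ∉ X)
    = Finset.univ.filter (fun e : Sym2 (Fin n) =>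
        e ∈ G.edgeSet ∧ ∃ a b : Fin n, e = s(a, b) ∧ a ∈ Z ∧ b ∉ Z) := by
  ext e
  simp only [Finset.mem_filter, Finset.mem_univ, true_and]
  constructor
  · rintro ⟨hE, a, b, rfl, ha, hb⟩
    exact ⟨hE, b, a, Sym2.eq_swap, (hZ b).2 hb, fun h => (hZ a).1 h ha⟩
  · rintro ⟨hE, a, b, rfl, ha, hb⟩
    refine ⟨hE, b, a, Sym2.eq_swap, ?_, ?_⟩
    · by_contra h
      exact hb ((hZ b).2 h)
    · exact fun h => (hZ a).1 ha h


set_option maxHeartbeats 6000000 in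
theorem stmt6 (n : ℕ) [NeZero n] (hn : 2 ≤ n) (k : ℕ) (G : SimpleGraph (Fin n))
    (houter : ∀ l : Fin n, G.Adj l (l + 1))
    (u : Sym2 (Fin n) → ℕ) (hu : ∀ e ∈ G.edgeSet, 0 < u e)
    (sdem tdem : Fin k → Fin n)
    (hnc : NonCrossing n
      (G.edgeSet ∪ {e : Sym2 (Fin n) | ∃ m : Fin k, e = s(sdem m, tdem m)}))
    (hcut : CutCondition G u sdem tdem)
    (m0 : Fin k) (i j : Fin n) (hij : i < j)
    (hdem : s(sdem m0, tdem m0) = s(i, j))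
    (hnoterm : ∀ l : Fin n, i < l → l < j → ∀ m : Fin k, sdem m ≠ l ∧ tdem m ≠ l) :
    CutCondition G
      (fun e => if ∃ l : Fin n, i ≤ l ∧ l < j ∧ e = s(l, l + 1) then u e - 1 else u e)
      (fun m : {m : Fin k // m ≠ m0} => sdem m.1)
      (fun m : {m : Fin k // m ≠ m0} => tdem m.1) := by
  intro X0
  have hcut' : ∀ Y : Set (Fin n),
      (Finset.univ.filter (fun m : Fin k =>
        (sdem m ∈ Y ∧ tdem m ∉ Y) ∨ (sdem m ∉ Y ∧ tdem m ∈ Y))).card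
        ≤ ∑ e ∈ Finset.univ.filter (fun e : Sym2 (Fin n) =>
            e ∈ G.edgeSet ∧ ∃ a b : Fin n, e = s(a, b) ∧ a ∈ Y ∧ b ∉ Y), u e := by
    intro Y
    exact hcut Y
  suffices H : ∀ N : ℕ, ∀ Y : Set (Fin n), (flipSet Y).card ≤ N →
      (Finset.univ.filter (fun m : {m : Fin k // m ≠ m0} =>
        (sdem m.1 ∈ Y ∧ tdem m.1 ∉ Y) ∨ (sdem m.1 ∉ Y ∧ tdem m.1 ∈ Y))).card
      ≤ ∑ e ∈ Finset.univ.filter (fun e : Sym2 (Fin n) =>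
            e ∈ G.edgeSet ∧ ∃ a b : Fin n, e = s(a, b) ∧ a ∈ Y ∧ b ∉ Y),
          (if ∃ l : Fin n, i ≤ l ∧ l < j ∧ e = s(l, l + 1) then u e - 1 else u e) by
    exact H (flipSet X0).card X0 le_rfl
  intro N
  induction N with
  | zero =>
    intro Y hN
    have hflipempty : flipSet Y = ∅ := by
      rw [← Finset.card_eq_zero]; omega
    have hconst : ∀ l : Fin n, l ∈ Y ↔ l + 1 ∈ Y := by
      intro l
      by_contra hfl
      have hmem : l ∈ flipSet Y := by simp [flipSet, hfl]
      rw [hflipempty] at hmem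
      exact absurd hmem (Finset.notMem_empty l)
    have hsame : ∀ v w : Fin n, v ∈ Y → w ∈ Y := fun v w hv => allSucc hconst hv w
    have hzero : (Finset.univ.filter (fun m : {m : Fin k // m ≠ m0} =>
        (sdem m.1 ∈ Y ∧ tdem m.1 ∉ Y) ∨ (sdem m.1 ∉ Y ∧ tdem m.1 ∈ Y))).card = 0 := by
      rw [Finset.card_eq_zero, Finset.filter_eq_empty_iff]
      intro m _
      rintro (⟨h1, h2⟩ | ⟨h1, h2⟩)
      · exact h2 (hsame _ _ h1)
      · exact h1 (hsame _ _ h2)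
    rw [hzero]
    exact Nat.zero_le _
  | succ N ih =>
    intro Y hN
    by_cases hc1 : ∃ a b : Fin n, a ∈ Y ∧ b ∈ Y ∧ ¬ ncReach G Y a b
    · obtain ⟨a0, b0, ha0, hb0, hnr⟩ := hc1
      obtain ⟨X1, X2, hmem, hdisj, hnoadj, hcard1, hcard2⟩ := splitStep houter ha0 hb0 hnr
      have h1 := ih X1 (by omega)
      have h2 := ih X2 (by omega)
      calc (Finset.univ.filter (fun m : {m : Fin k // m ≠ m0} =>
            (sdem m.1 ∈ Y ∧ tdem m.1 ∉ Y) ∨ (sdem m.1 ∉ Y ∧ tdem m.1 ∈ Y))).card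
          ≤ _ + _ := sepSplit (fun m : {m : Fin k // m ≠ m0} => sdem m.1)
            (fun m : {m : Fin k // m ≠ m0} => tdem m.1) hmem
        _ ≤ _ := Nat.add_le_add h1 h2
        _ = _ := (deltaSplit hmem hdisj hnoadj _).symm
    · by_cases hc2 : ∃ a b : Fin n, a ∈ Yᶜ ∧ b ∈ Yᶜ ∧ ¬ ncReach G Yᶜ a b
      · obtain ⟨Z, hZeq⟩ : ∃ Z : Set (Fin n), Z = Yᶜ := ⟨Yᶜ, rfl⟩
        obtain ⟨a0, b0, ha0, hb0, hnr⟩ := hc2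
        rw [← hZeq] at ha0 hb0 hnr
        have hZmem : ∀ v : Fin n, v ∈ Z ↔ v ∉ Y := by
          intro v; rw [hZeq]; exact Iff.rfl
        obtain ⟨X1, X2, hmem, hdisj, hnoadj, hcard1, hcard2⟩ := splitStep houter ha0 hb0 hnr
        rw [flipSet_swap hZmem] at hcard1 hcard2
        have h1 := ih X1 (by omega)
        have h2 := ih X2 (by omega)
        have hsepc : (Finset.univ.filter (fun m : {m : Fin k // m ≠ m0} =>
            (sdem m.1 ∈ Y ∧ tdem m.1 ∉ Y) ∨ (sdem m.1 ∉ Y ∧ tdem m.1 ∈ Y)))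
            = (Finset.univ.filter (fun m : {m : Fin k // m ≠ m0} =>
            (sdem m.1 ∈ Z ∧ tdem m.1 ∉ Z) ∨ (sdem m.1 ∉ Z ∧ tdem m.1 ∈ Z))) := by
          apply Finset.ext
          intro m
          simp only [Finset.mem_filter, Finset.mem_univ, true_and, hZmem]
          tauto
        rw [hsepc, deltaSwap hZmem]
        calc (Finset.univ.filter (fun m : {m : Fin k // m ≠ m0} =>
            (sdem m.1 ∈ Z ∧ tdem m.1 ∉ Z) ∨ (sdem m.1 ∉ Z ∧ tdem m.1 ∈ Z))).card
            ≤ _ + _ := sepSplit (fun m : {m : Fin k // m ≠ m0} => sdem m.1)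
              (fun m : {m : Fin k // m ≠ m0} => tdem m.1) hmem
          _ ≤ _ := Nat.add_le_add h1 h2
          _ = _ := (deltaSplit hmem hdisj hnoadj _).symm
      · push_neg at hc1 hc2
        exact baseCase n hn k G u hu sdem tdem hnc m0 i j hij hdem hnoterm Y (hcut' Y)
          hc1 hc2
end

section
/- Let G be a finite simple graph whose vertex set is V = A ∪ B with A ∩ B = {v} and such that every edge of G has both endpoints in A or both endpoints in B; let u assign a positive integer capacity to each edge. Let (s_1,t_1), ..., (s_k,t_k) be demand pairs on V. Form a demand list H_A on the induced subgraph G[A] by taking, for each i, the pair obtained from (s_i,t_i) by replacing any endpoint lying in B∖{v} by v, and discarding the result if the two endpoints become equal; define H_B symmetrically. Then: (a) if the cut condition holds for G, u and the demands (for every X ⊆ V, the number of demands with exactly one endpoint in X is at most u(δ_G(X))), then the cut condition holds for G[A], u, H_A and for G[B], u, H_B; and (b) if H_A is routable in G[A] with capacities u and H_B is routable in G[B] with capacities u, then the original demands are routable in G with capacities u. -/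
open SimpleGraph
open scoped Classical

/-- The total `u`-capacity of the cut induced by `X` in the subgraph of `G` induced on `A`:
the sum of `u e` over the edges `e` of `G` with both endpoints in `A` and with exactly one
endpoint in `X`.  Taking `A = Set.univ` gives the usual cut `δ_G(X)`. -/
noncomputable def cutWeightIn {V : Type*} [Fintype V] (G : SimpleGraph V)
    (u : Sym2 V → ℕ) (A X : Set V) : ℕ :=
  ∑ e ∈ Finset.univ.filter
      (fun e : Sym2 V =>
        e ∈ G.edgeSet ∧ (∀ x ∈ e, x ∈ A) ∧ ∃ a b : V, e = s(a, b) ∧ a ∈ X ∧ b ∉ X),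
    u e

/-- The cut condition for the demands `(sdem i, tdem i)` in the subgraph of `G` induced
on `A`: for every `X ⊆ A`, the number of demands separated by `X` is at most the capacity
of the cut of `G[A]` induced by `X`. -/
def CutConditionIn {V : Type*} [Fintype V] (G : SimpleGraph V) (u : Sym2 V → ℕ)
    (A : Set V) {ι : Type*} [Fintype ι] (sdem tdem : ι → V) : Prop :=
  ∀ X : Set V, X ⊆ A →
    (Finset.univ.filter
        (fun i : ι => (sdem i ∈ X ∧ tdem i ∉ X) ∨ (sdem i ∉ X ∧ tdem i ∈ X))).card
      ≤ cutWeightIn G u A X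

/-- The demands `(sdem i, tdem i)` are routable in the subgraph of `G` induced on `A`,
with capacities `u`: there are paths of `G` all of whose vertices lie in `A`, one joining
`sdem i` to `tdem i` for each `i`, such that every edge `e` lies on at most `u e` of the
paths.  Taking `A = Set.univ` gives routability in `G` itself. -/
def RoutableIn {V : Type*} [Fintype V] (G : SimpleGraph V) (u : Sym2 V → ℕ)
    (A : Set V) {ι : Type*} [Fintype ι] (sdem tdem : ι → V) : Prop :=
  ∃ P : (i : ι) → G.Walk (sdem i) (tdem i),
    (∀ i, (P i).IsPath) ∧
    (∀ i, ∀ x ∈ (P i).support, x ∈ A) ∧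
    ∀ e : Sym2 V,
      (Finset.univ.filter (fun i : ι => e ∈ (P i).edges)).card ≤ u e

/-- Replace any vertex outside `A` by the cut vertex `v`. -/
noncomputable def projTo {V : Type*} (A : Set V) (v : V) : V → V :=
  fun x => if x ∈ A then x else v

lemma projTo_pos {V : Type*} {A : Set V} {v x : V} (hx : x ∈ A) : projTo A v x = x :=
  if_pos hx

lemma projTo_neg {V : Type*} {A : Set V} {v x : V} (hx : x ∉ A) : projTo A v x = v :=
  if_neg hx

/-- If `x` lies in the other side `A`, then its projection to `B` is the cut vertex. -/
lemma projTo_eq_v {V : Type*} {A B : Set V} {v x : V} (hinter : A ∩ B = {v})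
    (hx : x ∈ A) : projTo B v x = v := by
  unfold projTo
  split_ifs with h
  · have : x ∈ A ∩ B := ⟨hx, h⟩
    rw [hinter] at this
    exact this
  · rfl

lemma mem_support_of_mem_edges' {V : Type*} {G : SimpleGraph V} {a b : V}
    {p : G.Walk a b} {e : Sym2 V} (he : e ∈ p.edges) : ∀ x ∈ e, x ∈ p.support := by
  induction e using Sym2.ind with
  | _ x y =>
    intro z hz
    rcases Sym2.mem_iff.mp hz with rfl | rfl
    · exact Walk.fst_mem_support_of_mem_edges p he
    · exact Walk.snd_mem_support_of_mem_edges p he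

lemma isDiag_of_all_eq {V : Type*} {v : V} {e : Sym2 V} (h : ∀ x ∈ e, x = v) :
    e.IsDiag := by
  induction e using Sym2.ind with
  | _ x y =>
    rw [Sym2.mk_isDiag_iff]
    rw [h x (Sym2.mem_mk_left x y), h y (Sym2.mem_mk_right x y)]

/-- Appending a path in `A` ending at the cut vertex with a path in `B` starting there
gives a path. -/
lemma append_isPath_of_sides {V : Type*} {G : SimpleGraph V} {A B : Set V} {v s t : V}
    (hinter : A ∩ B = {v}) {p : G.Walk s v} {q : G.Walk v t}
    (hp : p.IsPath) (hq : q.IsPath)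
    (hpA : ∀ x ∈ p.support, x ∈ A) (hqB : ∀ x ∈ q.support, x ∈ B) :
    (p.append q).IsPath := by
  rw [Walk.isPath_def, Walk.support_append]
  refine hp.support_nodup.append (hq.support_nodup.sublist (List.tail_sublist _)) ?_
  intro x hxp hxq
  have hxA : x ∈ A := hpA x hxp
  have hxB : x ∈ B := hqB x (q.support_eq_cons ▸ List.mem_cons_of_mem v hxq)
  have hxv : x = v := by
    have : x ∈ A ∩ B := ⟨hxA, hxB⟩
    rwa [hinter] at this
  subst hxv
  have := hq.support_nodup
  rw [q.support_eq_cons] at this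
  exact (List.nodup_cons.mp this).1 hxq

/-- One side of the cut-condition inheritance. -/
lemma cutCondition_side {V : Type*} [Fintype V] (G : SimpleGraph V) (u : Sym2 V → ℕ)
    (A B : Set V) (v : V) (hcover : A ∪ B = Set.univ) (hinter : A ∩ B = {v})
    (hedges : ∀ e ∈ G.edgeSet, (∀ x ∈ e, x ∈ A) ∨ (∀ x ∈ e, x ∈ B))
    {ι : Type*} [Fintype ι] (sdem tdem : ι → V)
    (hcc : CutConditionIn G u Set.univ sdem tdem) :
    CutConditionIn G u A
      (fun i : {i : ι // projTo A v (sdem i) ≠ projTo A v (tdem i)} =>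
        projTo A v (sdem i.1))
      (fun i : {i : ι // projTo A v (sdem i) ≠ projTo A v (tdem i)} =>
        projTo A v (tdem i.1)) := by
  have hvA : v ∈ A := by
    have : v ∈ A ∩ B := by rw [hinter]; rfl
    exact this.1
  intro X hX
  set X' : Set V := if v ∈ X then X ∪ Aᶜ else X with hX'def
  -- membership transfer
  have hXA : ∀ x ∈ A, (x ∈ X' ↔ x ∈ X) := by
    intro x hxA
    rw [hX'def]
    split_ifs with hv
    · constructor
      · rintro (h | h)
        · exact h
        · exact absurd hxA h
      · exact fun h => Or.inl h
    · exact Iff.rfl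
  have hmem : ∀ x : V, (projTo A v x ∈ X ↔ x ∈ X') := by
    intro x
    by_cases hxA : x ∈ A
    · rw [projTo_pos hxA, hXA x hxA]
    · rw [projTo_neg hxA, hX'def]
      split_ifs with hv
      · exact iff_of_true hv (Or.inr hxA)
      · exact iff_of_false hv (fun hx => hxA (hX hx))
  -- B-edges do not cross X'
  have hBX' : ∀ b ∈ B, (b ∈ X' ↔ v ∈ X) := by
    intro b hbB
    by_cases hbA : b ∈ A
    · have : b = v := by
        have : b ∈ A ∩ B := ⟨hbA, hbB⟩
        rwa [hinter] at this
      subst this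
      rw [hXA b hbA]
    · rw [hX'def]
      split_ifs with hv
      · exact iff_of_true (Or.inr hbA) hv
      · exact iff_of_false (fun hb => hbA (hX hb)) hv
  -- cut weight equality
  have hw : cutWeightIn G u Set.univ X' = cutWeightIn G u A X := by
    unfold cutWeightIn
    congr 1
    ext e
    simp only [Finset.mem_filter, Finset.mem_univ, true_and]
    constructor
    · rintro ⟨heG, -, a, b, rfl, haX', hbX'⟩
      have heA : ∀ x ∈ s(a, b), x ∈ A := by
        rcases hedges _ heG with h | h
        · exact h
        · exfalso
          have haB : a ∈ B := h a (Sym2.mem_mk_left a b)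
          have hbB : b ∈ B := h b (Sym2.mem_mk_right a b)
          rw [hBX' a haB] at haX'
          rw [hBX' b hbB] at hbX'
          exact hbX' haX'
      refine ⟨heG, heA, a, b, rfl, ?_, ?_⟩
      · exact (hXA a (heA a (Sym2.mem_mk_left a b))).mp haX'
      · intro haX
        exact hbX' ((hXA b (heA b (Sym2.mem_mk_right a b))).mpr haX)
    · rintro ⟨heG, heA, a, b, rfl, haX, hbX⟩
      refine ⟨heG, fun x _ => trivial, a, b, rfl, ?_, ?_⟩
      · exact (hXA a (heA a (Sym2.mem_mk_left a b))).mpr haX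
      · intro h
        exact hbX ((hXA b (heA b (Sym2.mem_mk_right a b))).mp h)
  -- demand transfer
  have hcard :
      (Finset.univ.filter
          (fun i : {i : ι // projTo A v (sdem i) ≠ projTo A v (tdem i)} =>
            (projTo A v (sdem i.1) ∈ X ∧ projTo A v (tdem i.1) ∉ X) ∨
            (projTo A v (sdem i.1) ∉ X ∧ projTo A v (tdem i.1) ∈ X))).card ≤
      (Finset.univ.filter
          (fun i : ι => (sdem i ∈ X' ∧ tdem i ∉ X') ∨ (sdem i ∉ X' ∧ tdem i ∈ X'))).card := by
    apply Finset.card_le_card_of_injOn (fun i => i.1)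
    · intro i hi
      simp only [Finset.mem_coe, Finset.mem_filter, Finset.mem_univ, true_and] at hi ⊢
      rcases hi with ⟨h1, h2⟩ | ⟨h1, h2⟩
      · exact Or.inl ⟨(hmem _).mp h1, fun h => h2 ((hmem _).mpr h)⟩
      · exact Or.inr ⟨fun h => h1 ((hmem _).mpr h), (hmem _).mp h2⟩
    · intro i _ j _ h
      exact Subtype.ext h
  calc _ ≤ _ := hcard
    _ ≤ cutWeightIn G u Set.univ X' := hcc X' (fun _ _ => trivial)
    _ = cutWeightIn G u A X := hw

theorem stmt9 {V : Type*} [Fintype V] (G : SimpleGraph V)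
    (u : Sym2 V → ℕ) (hu : ∀ e ∈ G.edgeSet, 0 < u e)
    (A B : Set V) (v : V) (hcover : A ∪ B = Set.univ) (hinter : A ∩ B = {v})
    (hedges : ∀ e ∈ G.edgeSet, (∀ x ∈ e, x ∈ A) ∨ (∀ x ∈ e, x ∈ B))
    (k : ℕ) (sdem tdem : Fin k → V) :
    -- (a) the cut condition is inherited by the two sides
    ((CutConditionIn G u Set.univ sdem tdem →
      (CutConditionIn G u A
        (fun i : {i : Fin k // projTo A v (sdem i) ≠ projTo A v (tdem i)} =>
          projTo A v (sdem i.1))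
        (fun i : {i : Fin k // projTo A v (sdem i) ≠ projTo A v (tdem i)} =>
          projTo A v (tdem i.1)) ∧
       CutConditionIn G u B
        (fun i : {i : Fin k // projTo B v (sdem i) ≠ projTo B v (tdem i)} =>
          projTo B v (sdem i.1))
        (fun i : {i : Fin k // projTo B v (sdem i) ≠ projTo B v (tdem i)} =>
          projTo B v (tdem i.1))))) ∧
    -- (b) routability on the two sides yields routability of the original demands
    ((RoutableIn G u A
        (fun i : {i : Fin k // projTo A v (sdem i) ≠ projTo A v (tdem i)} =>
          projTo A v (sdem i.1))
        (fun i : {i : Fin k // projTo A v (sdem i) ≠ projTo A v (tdem i)} =>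
          projTo A v (tdem i.1)) →
      RoutableIn G u B
        (fun i : {i : Fin k // projTo B v (sdem i) ≠ projTo B v (tdem i)} =>
          projTo B v (sdem i.1))
        (fun i : {i : Fin k // projTo B v (sdem i) ≠ projTo B v (tdem i)} =>
          projTo B v (tdem i.1)) →
      RoutableIn G u Set.univ sdem tdem)) := by
  have hvAB : v ∈ A ∩ B := by rw [hinter]; rfl
  have hvA : v ∈ A := hvAB.1
  have hvB : v ∈ B := hvAB.2
  have hinter' : B ∩ A = {v} := by rw [Set.inter_comm]; exact hinter
  have hAB : ∀ x : V, x ∈ A ∨ x ∈ B := by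
    intro x
    have : x ∈ A ∪ B := by rw [hcover]; trivial
    exact this
  constructor
  · -- part (a)
    intro hcc
    constructor
    · exact cutCondition_side G u A B v hcover hinter hedges sdem tdem hcc
    · exact cutCondition_side G u B A v (by rw [Set.union_comm]; exact hcover) hinter'
        (fun e he => (hedges e he).symm) sdem tdem hcc
  · -- part (b)
    rintro ⟨PA, hPAp, hPAs, hPAc⟩ ⟨PB, hPBp, hPBs, hPBc⟩
    have key : ∀ i : Fin k, ∃ w : G.Walk (sdem i) (tdem i), w.IsPath ∧
        ∀ e ∈ w.edges,
          (∃ h : projTo A v (sdem i) ≠ projTo A v (tdem i), e ∈ (PA ⟨i, h⟩).edges) ∨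
          (∃ h : projTo B v (sdem i) ≠ projTo B v (tdem i), e ∈ (PB ⟨i, h⟩).edges) := by
      intro i
      by_cases hA : projTo A v (sdem i) ≠ projTo A v (tdem i) <;>
        by_cases hB : projTo B v (sdem i) ≠ projTo B v (tdem i)
      · -- both sides: demand crosses the cut vertex
        have hcase : (sdem i ∈ A ∧ tdem i ∉ A) ∨ (sdem i ∉ A ∧ tdem i ∈ A) := by
          by_cases hsA : sdem i ∈ A <;> by_cases htA : tdem i ∈ A
          · exact absurd (by rw [projTo_eq_v hinter hsA, projTo_eq_v hinter htA]) hB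
          · exact Or.inl ⟨hsA, htA⟩
          · exact Or.inr ⟨hsA, htA⟩
          · exact absurd (by rw [projTo_neg hsA, projTo_neg htA]) hA
        rcases hcase with ⟨hsA, htA⟩ | ⟨hsA, htA⟩
        · -- s ∈ A, t ∈ B \ A
          have htB : tdem i ∈ B := (hAB _).resolve_left htA
          have e1 : projTo A v (sdem i) = sdem i := projTo_pos hsA
          have e2 : projTo A v (tdem i) = v := projTo_neg htA
          have e3 : projTo B v (sdem i) = v := projTo_eq_v hinter hsA
          have e4 : projTo B v (tdem i) = tdem i := projTo_pos htB
          refine ⟨((PA ⟨i, hA⟩).copy e1 e2).append ((PB ⟨i, hB⟩).copy e3 e4), ?_, ?_⟩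
          · apply append_isPath_of_sides hinter
            · simpa using hPAp ⟨i, hA⟩
            · simpa using hPBp ⟨i, hB⟩
            · intro x hx
              rw [Walk.support_copy] at hx
              exact hPAs ⟨i, hA⟩ x hx
            · intro x hx
              rw [Walk.support_copy] at hx
              exact hPBs ⟨i, hB⟩ x hx
          · intro e he
            rw [Walk.edges_append, List.mem_append, Walk.edges_copy, Walk.edges_copy] at he
            rcases he with he | he
            · exact Or.inl ⟨hA, he⟩
            · exact Or.inr ⟨hB, he⟩
        · -- s ∈ B \ A, t ∈ A
          have hsB : sdem i ∈ B := (hAB _).resolve_left hsA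
          have e1 : projTo B v (sdem i) = sdem i := projTo_pos hsB
          have e2 : projTo B v (tdem i) = v := projTo_eq_v hinter htA
          have e3 : projTo A v (sdem i) = v := projTo_neg hsA
          have e4 : projTo A v (tdem i) = tdem i := projTo_pos htA
          refine ⟨((PB ⟨i, hB⟩).copy e1 e2).append ((PA ⟨i, hA⟩).copy e3 e4), ?_, ?_⟩
          · apply append_isPath_of_sides hinter'
            · simpa using hPBp ⟨i, hB⟩
            · simpa using hPAp ⟨i, hA⟩
            · intro x hx
              rw [Walk.support_copy] at hx
              exact hPBs ⟨i, hB⟩ x hx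
            · intro x hx
              rw [Walk.support_copy] at hx
              exact hPAs ⟨i, hA⟩ x hx
          · intro e he
            rw [Walk.edges_append, List.mem_append, Walk.edges_copy, Walk.edges_copy] at he
            rcases he with he | he
            · exact Or.inr ⟨hB, he⟩
            · exact Or.inl ⟨hA, he⟩
      · -- only A side: both endpoints in A
        push_neg at hB
        have hsA : sdem i ∈ A := by
          by_contra hsA
          have hsB : sdem i ∈ B := (hAB _).resolve_left hsA
          have h1 : projTo A v (sdem i) = v := projTo_neg hsA
          have htA : tdem i ∈ A := by
            by_contra htA
            exact hA (by rw [h1, projTo_neg htA])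
          have h2 : projTo B v (tdem i) = v := projTo_eq_v hinter htA
          have h3 : projTo B v (sdem i) = sdem i := projTo_pos hsB
          rw [h3, h2] at hB
          exact hsA (by rw [hB]; exact hvA)
        have htA : tdem i ∈ A := by
          by_contra htA
          have htB : tdem i ∈ B := (hAB _).resolve_left htA
          have h1 : projTo A v (tdem i) = v := projTo_neg htA
          have h2 : projTo B v (sdem i) = v := projTo_eq_v hinter hsA
          have h3 : projTo B v (tdem i) = tdem i := projTo_pos htB
          rw [h2, h3] at hB
          exact htA (by rw [← hB]; exact hvA)
        refine ⟨(PA ⟨i, hA⟩).copy (projTo_pos hsA) (projTo_pos htA), ?_, ?_⟩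
        · simpa using hPAp ⟨i, hA⟩
        · intro e he
          rw [Walk.edges_copy] at he
          exact Or.inl ⟨hA, he⟩
      · -- only B side: both endpoints in B
        push_neg at hA
        have hsB : sdem i ∈ B := by
          by_contra hsB
          have hsA : sdem i ∈ A := (hAB _).resolve_right hsB
          have h1 : projTo B v (sdem i) = v := projTo_eq_v hinter hsA
          have htB : tdem i ∈ B := by
            by_contra htB
            have htA : tdem i ∈ A := (hAB _).resolve_right htB
            exact hB (by rw [h1, projTo_eq_v hinter htA])
          have h2 : projTo A v (tdem i) = v := projTo_eq_v hinter' htB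
          have h3 : projTo A v (sdem i) = sdem i := projTo_pos hsA
          rw [h3, h2] at hA
          exact hsB (by rw [hA]; exact hvB)
        have htB : tdem i ∈ B := by
          by_contra htB
          have htA : tdem i ∈ A := (hAB _).resolve_right htB
          have h1 : projTo B v (tdem i) = v := projTo_eq_v hinter htA
          have h2 : projTo A v (sdem i) = v := projTo_eq_v hinter' hsB
          have h3 : projTo A v (tdem i) = tdem i := projTo_pos htA
          rw [h2, h3] at hA
          exact htB (by rw [← hA]; exact hvB)
        refine ⟨(PB ⟨i, hB⟩).copy (projTo_pos hsB) (projTo_pos htB), ?_, ?_⟩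
        · simpa using hPBp ⟨i, hB⟩
        · intro e he
          rw [Walk.edges_copy] at he
          exact Or.inr ⟨hB, he⟩
      · -- neither side: s = t
        push_neg at hA hB
        have hst : sdem i = tdem i := by
          by_cases hsA : sdem i ∈ A
          · rw [projTo_pos hsA] at hA
            by_cases htA : tdem i ∈ A
            · rwa [projTo_pos htA] at hA
            · rw [projTo_neg htA] at hA
              subst hA
              rw [projTo_eq_v hinter hsA,
                projTo_pos ((hAB _).resolve_left htA)] at hB
              exact absurd (show tdem i ∈ A by rw [← hB]; exact hvA) htA
          · have hsB : sdem i ∈ B := (hAB _).resolve_left hsA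
            rw [projTo_pos hsB] at hB
            by_cases htB : tdem i ∈ B
            · rwa [projTo_pos htB] at hB
            · have htA : tdem i ∈ A := (hAB _).resolve_right htB
              rw [projTo_eq_v hinter htA] at hB
              exact absurd (show sdem i ∈ A by rw [hB]; exact hvA) hsA
        refine ⟨(Walk.nil' (sdem i)).copy rfl hst, ?_, ?_⟩
        · simp
        · intro e he
          simp at he
    choose W hWp hWe using key
    refine ⟨W, hWp, fun i x _ => trivial, ?_⟩
    intro e
    by_cases heG : e ∈ G.edgeSet
    · by_cases hne : (Finset.univ.filter (fun i : Fin k => e ∈ (W i).edges)).Nonempty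
      · obtain ⟨i₀, hi₀⟩ := hne
        have hi₀e : e ∈ (W i₀).edges := (Finset.mem_filter.mp hi₀).2
        by_cases heA : ∀ x ∈ e, x ∈ A
        · -- all endpoints in A: all walks using e use their A-part
          have hsideA : ∀ i : Fin k, e ∈ (W i).edges →
              ∃ h : projTo A v (sdem i) ≠ projTo A v (tdem i), e ∈ (PA ⟨i, h⟩).edges := by
            intro i hi
            rcases hWe i e hi with h | ⟨h, he'⟩
            · exact h
            · exfalso
              have hall : ∀ x ∈ e, x = v := by
                intro x hx
                have hxB : x ∈ B := hPBs ⟨i, h⟩ x (mem_support_of_mem_edges' he' x hx)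
                have : x ∈ A ∩ B := ⟨heA x hx, hxB⟩
                rwa [hinter] at this
              exact G.not_isDiag_of_mem_edgeSet heG (isDiag_of_all_eq hall)
          set f : Fin k → {i : Fin k // projTo A v (sdem i) ≠ projTo A v (tdem i)} :=
            fun i => if h : projTo A v (sdem i) ≠ projTo A v (tdem i) then ⟨i, h⟩
              else ⟨i₀, (hsideA i₀ hi₀e).choose⟩ with hf
          refine le_trans (Finset.card_le_card_of_injOn f ?_ ?_) (hPAc e)
          · intro i hi
            have hi' : e ∈ (W i).edges := (Finset.mem_filter.mp hi).2
            obtain ⟨h, he'⟩ := hsideA i hi'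
            rw [hf]
            simp only [dif_pos h, Finset.mem_coe, Finset.mem_filter, Finset.mem_univ, true_and]
            exact he'
          · intro i hi j hj hij
            have hi' : e ∈ (W i).edges := (Finset.mem_filter.mp hi).2
            have hj' : e ∈ (W j).edges := (Finset.mem_filter.mp hj).2
            obtain ⟨h1, -⟩ := hsideA i hi'
            obtain ⟨h2, -⟩ := hsideA j hj'
            rw [hf] at hij
            simp only [dif_pos h1, dif_pos h2] at hij
            exact congrArg Subtype.val hij
        · -- all endpoints in B
          have heB : ∀ x ∈ e, x ∈ B := (hedges e heG).resolve_left heA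
          have hsideB : ∀ i : Fin k, e ∈ (W i).edges →
              ∃ h : projTo B v (sdem i) ≠ projTo B v (tdem i), e ∈ (PB ⟨i, h⟩).edges := by
            intro i hi
            rcases hWe i e hi with ⟨h, he'⟩ | h
            · exfalso
              exact heA (fun x hx => hPAs ⟨i, h⟩ x (mem_support_of_mem_edges' he' x hx))
            · exact h
          set f : Fin k → {i : Fin k // projTo B v (sdem i) ≠ projTo B v (tdem i)} :=
            fun i => if h : projTo B v (sdem i) ≠ projTo B v (tdem i) then ⟨i, h⟩
              else ⟨i₀, (hsideB i₀ hi₀e).choose⟩ with hf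
          refine le_trans (Finset.card_le_card_of_injOn f ?_ ?_) (hPBc e)
          · intro i hi
            have hi' : e ∈ (W i).edges := (Finset.mem_filter.mp hi).2
            obtain ⟨h, he'⟩ := hsideB i hi'
            rw [hf]
            simp only [dif_pos h, Finset.mem_coe, Finset.mem_filter, Finset.mem_univ, true_and]
            exact he'
          · intro i hi j hj hij
            have hi' : e ∈ (W i).edges := (Finset.mem_filter.mp hi).2
            have hj' : e ∈ (W j).edges := (Finset.mem_filter.mp hj).2
            obtain ⟨h1, -⟩ := hsideB i hi'
            obtain ⟨h2, -⟩ := hsideB j hj'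
            rw [hf] at hij
            simp only [dif_pos h1, dif_pos h2] at hij
            exact congrArg Subtype.val hij
      · rw [Finset.not_nonempty_iff_eq_empty] at hne
        rw [hne]
        simp
    · have : (Finset.univ.filter (fun i : Fin k => e ∈ (W i).edges)) = ∅ :=
        Finset.filter_eq_empty_iff.mpr
          (fun i _ hi => heG ((W i).edges_subset_edgeSet hi))
      rw [this]
      simp
end

section
/- For n ≥ 1, let G_n be the simple graph on the vertex set Z/(3·2^n)Z whose edge set is { {i·2^k, (i+1)·2^k} : 0 ≤ k ≤ n, 0 ≤ i < 3·2^{n−k} } (arithmetic modulo 3·2^n). There is a constant c > 0 such that for every n ≥ 1 and every spanning tree T of G_n, there exists an edge e of T whose fundamental cut X_e satisfies |δ_{G_n}(X_e)| ≥ c·n; equivalently, with unit capacities, the maximum over fundamental cuts X of T of the ratio |δ_{G_n}(X)| / |δ_T(X)| is Ω(log |V(G_n)|). -/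
open SimpleGraph

/-- The outerplanar graph `G_n` on `ℤ/(3·2^n)ℤ`: its edges are the pairs
`{i·2^k, (i+1)·2^k}` for `0 ≤ k ≤ n` and `0 ≤ i < 3·2^(n-k)` (arithmetic mod `3·2^n`). -/
def Gn (n : ℕ) : SimpleGraph (ZMod (3 * 2 ^ n)) :=
  SimpleGraph.fromEdgeSet
    {e : Sym2 (ZMod (3 * 2 ^ n)) | ∃ k i : ℕ, k ≤ n ∧ i < 3 * 2 ^ (n - k) ∧
      e = s(((i * 2 ^ k : ℕ) : ZMod (3 * 2 ^ n)),
            (((i + 1) * 2 ^ k : ℕ) : ZMod (3 * 2 ^ n)))}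

/-- The cut `δ_G(X)`: the set of edges of `G` with exactly one endpoint in `X`. -/
def cutEdgeSet {W : Type*} (G : SimpleGraph W) (X : Set W) : Set (Sym2 W) :=
  {e : Sym2 W | e ∈ G.edgeSet ∧ ∃ a b : W, e = s(a, b) ∧ a ∈ X ∧ b ∉ X}

/-- The shore (containing `a`) of the fundamental cut of the edge `e` of the tree `T`:
the vertex set of the component of `T - e` containing `a`. -/
def fundCut {W : Type*} (T : SimpleGraph W) (a : W) (e : Sym2 W) : Set W :=
  {x : W | (T.deleteEdges {e}).Reachable a x}

/-- Discrete intermediate value: if `P 0` and `¬ P m` then somewhere `P` flips. -/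
lemma nat_ivt {P : ℕ → Prop} : ∀ m : ℕ, P 0 → ¬ P m → ∃ j, j < m ∧ P j ∧ ¬ P (j + 1) := by
  intro m h0 hm
  induction m with
  | zero => exact absurd h0 hm
  | succ m ih =>
    by_cases h : P m
    · exact ⟨m, Nat.lt_succ_self m, h, hm⟩
    · obtain ⟨j, hj, hPj, hPj'⟩ := ih h
      exact ⟨j, hj.trans (Nat.lt_succ_self m), hPj, hPj'⟩

theorem stmt10 :
    ∃ c : ℝ, 0 < c ∧
      ∀ n : ℕ, 1 ≤ n →
        ∀ T : SimpleGraph (ZMod (3 * 2 ^ n)), T ≤ Gn n → T.IsTree →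
          ∃ e ∈ T.edgeSet, ∃ a b : ZMod (3 * 2 ^ n), e = s(a, b) ∧
            c * (n : ℝ) ≤ ((cutEdgeSet (Gn n) (fundCut T a e)).ncard : ℝ) := by
  refine ⟨1, one_pos, ?_⟩
  intro n hn T _hle hT
  haveI : NeZero (3 * 2 ^ n) := ⟨by positivity⟩
  have hpow_pos : ∀ k : ℕ, 0 < 2 ^ k := fun k => Nat.pow_pos (by norm_num)
  have hpow_le : ∀ k : ℕ, k ≤ n → 2 ^ k ≤ 2 ^ n := fun k hk =>
    Nat.pow_le_pow_right (by norm_num) hk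
  have h2n_lt : 2 ^ n < 3 * 2 ^ n := by
    have := hpow_pos n; omega
  -- casts of small positive naturals are nonzero
  have hcast_ne : ∀ m : ℕ, 0 < m → m < 3 * 2 ^ n → ((m : ℕ) : ZMod (3 * 2 ^ n)) ≠ 0 := by
    intro m hm hmlt h
    rw [ZMod.natCast_eq_zero_iff] at h
    exact absurd (Nat.le_of_dvd hm h) (by omega)
  have h2n : ((2 ^ n : ℕ) : ZMod (3 * 2 ^ n)) ≠ (0 : ZMod (3 * 2 ^ n)) :=
    hcast_ne (2 ^ n) (hpow_pos n) h2n_lt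
  -- get a path from 0 to 2^n in T
  obtain ⟨w⟩ := hT.isConnected.preconnected (0 : ZMod (3 * 2 ^ n)) ((2 ^ n : ℕ) : ZMod (3 * 2 ^ n))
  have hne0 : (0 : ZMod (3 * 2 ^ n)) ≠ ((2 ^ n : ℕ) : ZMod (3 * 2 ^ n)) := fun h => h2n h.symm
  obtain ⟨c, hadj, q, hq⟩ :
      ∃ (c : ZMod (3 * 2 ^ n)) (h : T.Adj 0 c)
        (q : T.Walk c ((2 ^ n : ℕ) : ZMod (3 * 2 ^ n))), (SimpleGraph.Walk.cons h q).IsPath := by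
    obtain ⟨c, h, q, heq⟩ := SimpleGraph.Walk.exists_eq_cons_of_ne hne0 w.toPath.val
    exact ⟨c, h, q, heq ▸ w.toPath.prop⟩
  rw [SimpleGraph.Walk.cons_isPath_iff] at hq
  set e : Sym2 (ZMod (3 * 2 ^ n)) := s(0, c) with he
  set X : Set (ZMod (3 * 2 ^ n)) := fundCut T 0 e with hX
  -- 0 and 2^n are on opposite shores of the fundamental cut of e
  have hbridge : ¬ (T.deleteEdges {e}).Reachable 0 c := by
    have hb : T.IsBridge s(0, c) :=
      (isAcyclic_iff_forall_adj_isBridge.mp hT.IsAcyclic) hadj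
    exact hb
  have hqe : ∀ e' ∈ q.edges, e' ∉ ({e} : Set (Sym2 (ZMod (3 * 2 ^ n)))) := by
    intro e' he' hmem
    rw [Set.mem_singleton_iff] at hmem
    subst hmem
    exact hq.2 (q.fst_mem_support_of_mem_edges he')
  have hc2n : (T.deleteEdges {e}).Reachable c ((2 ^ n : ℕ) : ZMod (3 * 2 ^ n)) :=
    ⟨q.toDeleteEdges {e} hqe⟩
  have hX0 : (0 : ZMod (3 * 2 ^ n)) ∈ X := SimpleGraph.Reachable.refl _
  have hX2n : ((2 ^ n : ℕ) : ZMod (3 * 2 ^ n)) ∉ X := by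
    intro h
    exact hbridge (h.trans hc2n.symm)
  -- for each level k ≤ n, there is a level-k edge crossing the cut
  have key : ∀ k : ℕ, k ≤ n → ∃ j : ℕ, j < 3 * 2 ^ (n - k) ∧
      ((j * 2 ^ k : ℕ) : ZMod (3 * 2 ^ n)) ∈ X ∧
      (((j + 1) * 2 ^ k : ℕ) : ZMod (3 * 2 ^ n)) ∉ X := by
    intro k hk
    have h0 : (((0 * 2 ^ k : ℕ) : ZMod (3 * 2 ^ n)) ∈ X) := by
      simpa using hX0
    have hm : ¬ (((2 ^ (n - k) * 2 ^ k : ℕ) : ZMod (3 * 2 ^ n)) ∈ X) := by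
      have : 2 ^ (n - k) * 2 ^ k = 2 ^ n := by
        rw [← pow_add, Nat.sub_add_cancel hk]
      rw [this]; exact hX2n
    obtain ⟨j, hj, hPj, hPj'⟩ :=
      nat_ivt (P := fun j => ((j * 2 ^ k : ℕ) : ZMod (3 * 2 ^ n)) ∈ X) (2 ^ (n - k)) h0 hm
    exact ⟨j, by have := hpow_pos (n - k); omega, hPj, hPj'⟩
  -- choose such a crossing edge for each k
  let jf : Fin (n + 1) → ℕ := fun k => (key k.1 (Nat.lt_succ_iff.mp k.2)).choose
  have jf_spec : ∀ k : Fin (n + 1), jf k < 3 * 2 ^ (n - k.1) ∧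
      ((jf k * 2 ^ k.1 : ℕ) : ZMod (3 * 2 ^ n)) ∈ X ∧
      (((jf k + 1) * 2 ^ k.1 : ℕ) : ZMod (3 * 2 ^ n)) ∉ X :=
    fun k => (key k.1 (Nat.lt_succ_iff.mp k.2)).choose_spec
  let F : Fin (n + 1) → Sym2 (ZMod (3 * 2 ^ n)) := fun k =>
    s(((jf k * 2 ^ k.1 : ℕ) : ZMod (3 * 2 ^ n)), (((jf k + 1) * 2 ^ k.1 : ℕ) : ZMod (3 * 2 ^ n)))
  -- rewrite second endpoint as first + 2^k
  have hsnd : ∀ k : Fin (n + 1),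
      (((jf k + 1) * 2 ^ k.1 : ℕ) : ZMod (3 * 2 ^ n)) =
        ((jf k * 2 ^ k.1 : ℕ) : ZMod (3 * 2 ^ n)) + ((2 ^ k.1 : ℕ) : ZMod (3 * 2 ^ n)) := by
    intro k
    push_cast
    ring
  have hcast2k_ne : ∀ k : Fin (n + 1), ((2 ^ k.1 : ℕ) : ZMod (3 * 2 ^ n)) ≠ 0 := by
    intro k
    exact hcast_ne _ (hpow_pos k.1)
      (lt_of_le_of_lt (hpow_le k.1 (Nat.lt_succ_iff.mp k.2)) h2n_lt)
  have hF_ne : ∀ k : Fin (n + 1),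
      ((jf k * 2 ^ k.1 : ℕ) : ZMod (3 * 2 ^ n)) ≠
        (((jf k + 1) * 2 ^ k.1 : ℕ) : ZMod (3 * 2 ^ n)) := by
    intro k h
    rw [hsnd k, left_eq_add] at h
    exact hcast2k_ne k h
  -- each F k is in the cut
  have hFmem : ∀ k : Fin (n + 1), F k ∈ cutEdgeSet (Gn n) X := by
    intro k
    refine ⟨?_, ((jf k * 2 ^ k.1 : ℕ) : ZMod (3 * 2 ^ n)),
      (((jf k + 1) * 2 ^ k.1 : ℕ) : ZMod (3 * 2 ^ n)), rfl, (jf_spec k).2.1, (jf_spec k).2.2⟩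
    rw [Gn, edgeSet_fromEdgeSet]
    refine ⟨⟨k.1, jf k, Nat.lt_succ_iff.mp k.2, (jf_spec k).1, rfl⟩, ?_⟩
    intro hd
    exact hF_ne k (Sym2.mk_isDiag_iff.mp hd)
  -- the F k are pairwise distinct
  have hFinj : Function.Injective F := by
    intro k k' hkk'
    have h2 : ∀ m m' : Fin (n + 1),
        ((2 ^ m.1 : ℕ) : ZMod (3 * 2 ^ n)) = ((2 ^ m'.1 : ℕ) : ZMod (3 * 2 ^ n)) → m = m' := by
      intro m m' h
      have hv := congrArg ZMod.val h
      rw [ZMod.val_cast_of_lt (lt_of_le_of_lt (hpow_le m.1 (Nat.lt_succ_iff.mp m.2)) h2n_lt),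
        ZMod.val_cast_of_lt
          (lt_of_le_of_lt (hpow_le m'.1 (Nat.lt_succ_iff.mp m'.2)) h2n_lt)] at hv
      exact Fin.ext (Nat.pow_right_injective (le_refl 2) hv)
    simp only [F, hsnd, Sym2.eq_iff] at hkk'
    rcases hkk' with ⟨h1, h2'⟩ | ⟨h1, h2'⟩
    · rw [h1] at h2'
      exact h2 k k' (add_left_cancel h2')
    · -- degenerate case: 2^k' + 2^k ≡ 0 (mod 3·2^n), impossible
      exfalso
      have h4 : ((jf k' * 2 ^ k'.1 : ℕ) : ZMod (3 * 2 ^ n)) +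
          (((2 ^ k'.1 : ℕ) : ZMod (3 * 2 ^ n)) + ((2 ^ k.1 : ℕ) : ZMod (3 * 2 ^ n))) =
          ((jf k' * 2 ^ k'.1 : ℕ) : ZMod (3 * 2 ^ n)) + 0 := by
        rw [add_zero, ← add_assoc, ← h1, h2']
      have h3 := add_left_cancel h4
      have hsum : ((2 ^ k'.1 + 2 ^ k.1 : ℕ) : ZMod (3 * 2 ^ n)) = 0 := by
        exact_mod_cast h3
      exact hcast_ne (2 ^ k'.1 + 2 ^ k.1)
        (by positivity)
        (by
          have hk := hpow_le k.1 (Nat.lt_succ_iff.mp k.2)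
          have hk' := hpow_le k'.1 (Nat.lt_succ_iff.mp k'.2)
          have := hpow_pos n
          omega)
        hsum
  -- counting
  have hfin : (cutEdgeSet (Gn n) X).Finite := Set.toFinite _
  have hcard : n + 1 ≤ (cutEdgeSet (Gn n) X).ncard := by
    have hsub : Set.range F ⊆ cutEdgeSet (Gn n) X := by
      rintro _ ⟨k, rfl⟩; exact hFmem k
    have h1 : (Set.range F).ncard = n + 1 := by
      rw [← Set.image_univ, Set.ncard_image_of_injective _ hFinj, Set.ncard_univ]
      simp
    calc n + 1 = (Set.range F).ncard := h1.symm
      _ ≤ (cutEdgeSet (Gn n) X).ncard := Set.ncard_le_ncard hsub hfin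
  refine ⟨e, (T.mem_edgeSet).mpr hadj, 0, c, rfl, ?_⟩
  have : (n : ℝ) + 1 ≤ ((cutEdgeSet (Gn n) X).ncard : ℝ) := by
    exact_mod_cast hcard
  rw [one_mul]
  linarith
end
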